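/- Let y ∈ [g_min, g_max] with y ∉ B, and let j ∈ {1,…,k}. Then j ∈ I(y) if and only if 0 < (y − g(α_{j−1}))·sign(λ_j) < |λ_j|; equivalently, y lies strictly between g(α_{j−1}) and g(α_j). -/

import Mathlib

/-- The index set `I(y)` of monotonicity pieces `A_j` whose image contains `y`,
where `A_j = [α_{j-1}, α_j)` for `j < k` and `A_k = [α_{k-1}, α_k]`. -/
def IdxSet (g : ℝ → ℝ) (a : ℕ → ℝ) (k : ℕ) (y : ℝ) : Set ℕ :=
  {j | 1 ≤ j ∧ j ≤ k ∧
    ∃ x ∈ (if j = k then Set.Icc (a (k - 1)) (a k) else Set.Ico (a (j - 1)) (a j)), g x = y}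

theorem stmt5
    (α β : ℝ) (hαβ : α < β)
    (k : ℕ) (hk : 0 < k)
    (a : ℕ → ℝ) (ha0 : a 0 = α) (hak : a k = β)
    (hamono : ∀ j < k, a j < a (j + 1))
    (g g' : ℝ → ℝ)
    (hderiv : ∀ x ∈ Set.Icc α β, HasDerivWithinAt g (g' x) (Set.Icc α β) x)
    (hg'cont : ContinuousOn g' (Set.Icc α β))
    (hpiece : ∀ j, 1 ≤ j → j ≤ k →
      StrictMonoOn g (Set.Ioo (a (j - 1)) (a j)) ∨ StrictAntiOn g (Set.Ioo (a (j - 1)) (a j)))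
    (hg'ne : ∀ j, 1 ≤ j → j ≤ k → ∀ x ∈ Set.Ioo (a (j - 1)) (a j), g' x ≠ 0)
    (hcrit : ∀ j, 0 < j → j < k → g' (a j) = 0 ∧
      ((∀ᶠ x in nhdsWithin (a j) (Set.Icc α β \ {a j}), g x < g (a j)) ∨
       (∀ᶠ x in nhdsWithin (a j) (Set.Icc α β \ {a j}), g (a j) < g x)))
    (ℓ : ℕ) (b : ℕ → ℝ)
    (hbmono : ∀ i < ℓ, b i < b (i + 1))
    (hB : g '' {x | ∃ j ≤ k, a j = x} = {y | ∃ i ≤ ℓ, b i = y})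
    (y : ℝ) (hy : y ∈ Set.Icc (b 0) (b ℓ))
    (hyB : ∀ j ≤ k, g (a j) ≠ y)
    (j : ℕ) (hj1 : 1 ≤ j) (hjk : j ≤ k) :
    (j ∈ IdxSet g a k y ↔
      (0 < (y - g (a (j - 1))) * Real.sign (g (a j) - g (a (j - 1))) ∧
       (y - g (a (j - 1))) * Real.sign (g (a j) - g (a (j - 1))) < |g (a j) - g (a (j - 1))|)) ∧
    (j ∈ IdxSet g a k y ↔
      (min (g (a (j - 1))) (g (a j)) < y ∧ y < max (g (a (j - 1))) (g (a j)))) := by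
  set c := a (j - 1) with hc
  set d := a j with hd
  -- monotonicity of a on [0, k]
  have ha_le : ∀ i i', i ≤ i' → i' ≤ k → a i ≤ a i' := by
    intro i i' hii' hi'k
    induction i' with
    | zero => simpa [Nat.le_zero.mp hii']
    | succ n ih =>
      rcases Nat.le_succ_iff.mp hii' with h | h
      · exact le_trans (ih h (le_trans (Nat.le_succ n) hi'k))
          (le_of_lt (hamono n (lt_of_lt_of_le (Nat.lt_succ_self n) hi'k)))
      · rw [h]
  have hcd : c < d := by
    have := hamono (j - 1) (by omega)
    rwa [Nat.sub_add_cancel hj1] at this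
  have hsub : Set.Icc c d ⊆ Set.Icc α β := by
    apply Set.Icc_subset_Icc
    · rw [← ha0]; exact ha_le 0 (j - 1) (Nat.zero_le _) (by omega)
    · rw [← hak]; exact ha_le j k hjk le_rfl
  have hsubIoo : Set.Ioo c d ⊆ Set.Icc α β := fun x hx => hsub (Set.Ioo_subset_Icc_self hx)
  have hgc : g c ≠ y := hyB (j - 1) (by omega)
  have hgd : g d ≠ y := hyB j hjk
  -- continuity of g on Icc c d
  have hgcont : ContinuousOn g (Set.Icc c d) := fun x hx =>
    ((hderiv x (hsub hx)).continuousWithinAt).mono hsub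
  -- g' has constant sign on Ioo c d
  have hne : ∀ x ∈ Set.Ioo c d, g' x ≠ 0 := fun x hx => hg'ne j hj1 hjk x hx
  have hsign : (∀ x ∈ Set.Ioo c d, 0 < g' x) ∨ (∀ x ∈ Set.Ioo c d, g' x < 0) := by
    by_cases hall : ∀ x ∈ Set.Ioo c d, 0 < g' x
    · exact Or.inl hall
    · push_neg at hall
      obtain ⟨x₀, hx₀, hx₀le⟩ := hall
      have hx₀neg : g' x₀ < 0 := lt_of_le_of_ne hx₀le (hne x₀ hx₀)
      right
      intro x hx
      by_contra hxe
      push_neg at hxe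
      have hxpos : 0 < g' x := lt_of_le_of_ne hxe (Ne.symm (hne x hx))
      have hIcc : Set.uIcc x x₀ ⊆ Set.Ioo c d := by
        rw [Set.uIcc_eq_union]
        rintro t (ht | ht)
        · exact ⟨lt_of_lt_of_le (lt_min hx.1 hx₀.1) (le_trans (min_le_left _ _) ht.1),
            lt_of_le_of_lt (le_trans ht.2 (le_max_right _ _)) (max_lt hx.2 hx₀.2)⟩
        · exact ⟨lt_of_lt_of_le (lt_min hx.1 hx₀.1) (le_trans (min_le_right _ _) ht.1),
            lt_of_le_of_lt (le_trans ht.2 (le_max_left _ _)) (max_lt hx.2 hx₀.2)⟩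
      have hcont' : ContinuousOn g' (Set.uIcc x x₀) :=
        hg'cont.mono (fun t ht => hsubIoo (hIcc ht))
      have h0 : (0:ℝ) ∈ Set.uIcc (g' x) (g' x₀) :=
        Set.mem_uIcc.mpr (Or.inr ⟨hx₀neg.le, hxpos.le⟩)
      obtain ⟨t, ht, ht0⟩ := intermediate_value_uIcc hcont' h0
      exact hne t (hIcc ht) ht0
  -- derivative within Ioo c d
  have hderiv' : ∀ x ∈ Set.Ioo c d, HasDerivWithinAt g (g' x) (Set.Ioo c d) x :=
    fun x hx => (hderiv x (hsubIoo hx)).mono hsubIoo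
  -- strict mono or strict anti on Icc c d
  have hmonoanti : StrictMonoOn g (Set.Icc c d) ∨ StrictAntiOn g (Set.Icc c d) := by
    rcases hsign with hs | hs
    · left
      exact strictMonoOn_of_hasDerivWithinAt_pos (convex_Icc c d) hgcont
        (by rw [interior_Icc]; exact hderiv') (by rw [interior_Icc]; exact hs)
    · right
      exact strictAntiOn_of_hasDerivWithinAt_neg (convex_Icc c d) hgcont
        (by rw [interior_Icc]; exact hderiv') (by rw [interior_Icc]; exact hs)
  -- membership in IdxSet reduces to existence in the closed interval
  have hmem : j ∈ IdxSet g a k y ↔ ∃ x ∈ Set.Icc c d, g x = y := by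
    unfold IdxSet
    simp only [Set.mem_setOf_eq, hj1, hjk, true_and]
    by_cases hjkeq : j = k
    · subst hjkeq; simp; rfl
    · simp only [hjkeq, if_false]
      constructor
      · rintro ⟨x, hx, hgx⟩
        exact ⟨x, Set.Ico_subset_Icc_self hx, hgx⟩
      · rintro ⟨x, hx, hgx⟩
        refine ⟨x, ⟨hx.1, lt_of_le_of_ne hx.2 ?_⟩, hgx⟩
        intro hxd
        exact hgd (show g (a j) = y from hxd ▸ hgx)
  -- key equivalence with the min/max characterization
  have hcm : c ∈ Set.Icc c d := ⟨le_rfl, hcd.le⟩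
  have hdm : d ∈ Set.Icc c d := ⟨hcd.le, le_rfl⟩
  have key : (∃ x ∈ Set.Icc c d, g x = y) ↔
      (min (g c) (g d) < y ∧ y < max (g c) (g d)) := by
    rcases hmonoanti with hm | hm
    · have hcd' : g c < g d := hm hcm hdm hcd
      rw [min_eq_left hcd'.le, max_eq_right hcd'.le]
      constructor
      · rintro ⟨x, hx, rfl⟩
        have hxc : c < x := lt_of_le_of_ne hx.1 (fun h => hgc (by rw [h]))
        have hxd : x < d := lt_of_le_of_ne hx.2 (fun h => hgd (by rw [← h]))
        exact ⟨hm hcm hx hxc, hm hx hdm hxd⟩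
      · rintro ⟨h1, h2⟩
        obtain ⟨x, hx, hgx⟩ := intermediate_value_Ioo hcd.le hgcont ⟨h1, h2⟩
        exact ⟨x, Set.Ioo_subset_Icc_self hx, hgx⟩
    · have hcd' : g d < g c := hm hcm hdm hcd
      rw [min_eq_right hcd'.le, max_eq_left hcd'.le]
      constructor
      · rintro ⟨x, hx, rfl⟩
        have hxc : c < x := lt_of_le_of_ne hx.1 (fun h => hgc (by rw [h]))
        have hxd : x < d := lt_of_le_of_ne hx.2 (fun h => hgd (by rw [← h]))
        exact ⟨hm hx hdm hxd, hm hcm hx hxc⟩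
      · rintro ⟨h1, h2⟩
        obtain ⟨x, hx, hgx⟩ := intermediate_value_Ioo' hcd.le hgcont ⟨h1, h2⟩
        exact ⟨x, Set.Ioo_subset_Icc_self hx, hgx⟩
  have part2 : j ∈ IdxSet g a k y ↔
      (min (g c) (g d) < y ∧ y < max (g c) (g d)) := hmem.trans key
  refine ⟨?_, part2⟩
  rw [part2]
  have hL : g c ≠ g d := by
    rcases hmonoanti with hm | hm
    · exact ne_of_lt (hm hcm hdm hcd)
    · exact ne_of_gt (hm hcm hdm hcd)
  rcases lt_or_gt_of_ne hL with h | h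
  · have hpos : 0 < g d - g c := sub_pos.mpr h
    rw [Real.sign_of_pos hpos, abs_of_pos hpos, min_eq_left h.le, max_eq_right h.le]
    constructor
    · rintro ⟨h1, h2⟩; constructor <;> linarith
    · rintro ⟨h1, h2⟩; constructor <;> linarith
  · have hneg : g d - g c < 0 := sub_neg.mpr h
    rw [Real.sign_of_neg hneg, abs_of_neg hneg, min_eq_right h.le, max_eq_left h.le]
    constructor
    · rintro ⟨h1, h2⟩; constructor <;> nlinarith
    · rintro ⟨h1, h2⟩; constructor <;> nlinarith
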